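/- Let H be an additive subgroup of ℝⁿ with dim_ℝ(span_ℝ(H)) < n. Then for every u ∈ ℝⁿ, the additive subgroup generated by H ∪ {u} (that is, H + ℤu) is not dense in ℝⁿ. -/

import Mathlib

/-- Corollary 1.7: if the span of an additive subgroup `H` of `ℝⁿ` has dimension
less than `n`, then for every `u` the subgroup `H + ℤu` is not dense in `ℝⁿ`. -/
theorem not_dense_add_zmultiples_of_finrank_span_lt (n : ℕ) (H : AddSubgroup (Fin n → ℝ))
    (hdim : Module.finrank ℝ (Submodule.span ℝ (H : Set (Fin n → ℝ))) < n) :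
    ∀ u : Fin n → ℝ,
      ¬ Dense ((H ⊔ AddSubgroup.zmultiples u : AddSubgroup (Fin n → ℝ)) : Set (Fin n → ℝ)) := by
  intro u hdense
  set V := Submodule.span ℝ (H : Set (Fin n → ℝ)) with hVdef
  have hV : V < ⊤ := by
    rw [lt_top_iff_ne_top]
    intro h
    rw [h] at hdim
    simp [Module.finrank_pi] at hdim
  obtain ⟨f, hf0, hfmap⟩ := V.exists_dual_map_eq_bot_of_lt_top hV inferInstance
  have hker : ∀ x ∈ V, f x = 0 := by
    intro x hx
    have : f x ∈ V.map f := Submodule.mem_map_of_mem hx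
    rwa [hfmap, Submodule.mem_bot] at this
  have hcont : Continuous f := f.continuous_of_finiteDimensional
  have hsurj : Function.Surjective f := by
    obtain ⟨x, hx⟩ : ∃ x, f x ≠ 0 := by
      by_contra h
      push_neg at h
      exact hf0 (LinearMap.ext fun x => h x)
    intro y
    exact ⟨(y / f x) • x, by rw [map_smul, smul_eq_mul, div_mul_cancel₀ y hx]⟩
  have hdi : Dense (f '' ((H ⊔ AddSubgroup.zmultiples u : AddSubgroup (Fin n → ℝ)) :
      Set (Fin n → ℝ))) := hsurj.denseRange.dense_image hcont hdense
  have hsub : (f '' ((H ⊔ AddSubgroup.zmultiples u : AddSubgroup (Fin n → ℝ)) :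
      Set (Fin n → ℝ))) ⊆ Set.range (· • f u : ℤ → ℝ) := by
    rintro - ⟨x, hx, rfl⟩
    rw [SetLike.mem_coe, AddSubgroup.mem_sup] at hx
    obtain ⟨h, hh, k, hk, rfl⟩ := hx
    obtain ⟨m, rfl⟩ := AddSubgroup.mem_zmultiples_iff.mp hk
    refine ⟨m, ?_⟩
    have h0 : f h = 0 := hker h (Submodule.subset_span hh)
    rw [map_add, h0, zero_add, map_zsmul]
  exact not_denseRange_zsmul (hdi.mono hsub)
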